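/- Let G be an AH-algebra. Then the set Ω of states on G is order determining: for all g,h ∈ G, g ≤ h if and only if ω(g) ≤ ω(h) for every state ω ∈ Ω. -/

import Mathlib

/-- An e-ring `(R,E)`: an associative ring `R` with unity together with a set `E ⊆ R`
of effects, satisfying the Foulis axioms.  `E⁺` is realized as the additive submonoid
closure of `E` (the set of all finite sums of effects). -/
structure ERing (R : Type*) [Ring R] where
  E : Set R
  zero_mem : (0 : R) ∈ E
  one_mem : (1 : R) ∈ E
  compl_mem : ∀ e ∈ E, 1 - e ∈ E
  epos_i : ∀ a ∈ AddSubmonoid.closure E, -a ∈ AddSubmonoid.closure E → a = 0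
  epos_ii : ∀ a ∈ AddSubmonoid.closure E, 1 - a ∈ AddSubmonoid.closure E → a ∈ E
  epos_iii : ∀ a ∈ AddSubmonoid.closure E, ∀ b ∈ AddSubmonoid.closure E,
    a * b = b * a → a * b ∈ AddSubmonoid.closure E
  epos_iv : ∀ a ∈ AddSubmonoid.closure E, ∀ b ∈ AddSubmonoid.closure E,
    a * b * a ∈ AddSubmonoid.closure E
  epos_v : ∀ a ∈ AddSubmonoid.closure E, ∀ b ∈ AddSubmonoid.closure E,
    a * b * a = 0 → a * b = 0 ∧ b * a = 0
  epos_vi : ∀ a ∈ AddSubmonoid.closure E, ∀ b ∈ AddSubmonoid.closure E,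
    (a - b) ^ 2 ∈ AddSubmonoid.closure E
  zero_ne_one : (0 : R) ≠ 1

namespace ERing

variable {R : Type*} [Ring R] (er : ERing R)

/-- `E⁺`, the set of all finite sums of effects; the positive cone of the directed group. -/
def Epos : Set R := (AddSubmonoid.closure er.E : Set R)

/-- The directed group `G = E⁺ - E⁺` of the e-ring. -/
def G : Set R := {g | ∃ a ∈ er.Epos, ∃ b ∈ er.Epos, g = a - b}

/-- The partial order on the directed group: `g ≤ h` iff `h - g ∈ E⁺`. -/
def le (g h : R) : Prop := h - g ∈ er.Epos

/-- The set of projections `P = {p ∈ G : p = p²}`. -/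
def P : Set R := {p | p ∈ er.G ∧ p = p ^ 2}

/-- The commutant in `G` of a subset `A ⊆ G`. -/
def commutant (A : Set R) : Set R := {g | g ∈ er.G ∧ ∀ a ∈ A, g * a = a * g}

/-- The bicommutant in `G` of a subset `A ⊆ G`. -/
def CC (A : Set R) : Set R := er.commutant (er.commutant A)

/-- `s` is the supremum of `A` within the subset `S` (w.r.t. the e-ring order). -/
def IsSupIn (S A : Set R) (s : R) : Prop :=
  s ∈ S ∧ (∀ a ∈ A, er.le a s) ∧ ∀ b ∈ S, (∀ a ∈ A, er.le a b) → er.le s b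

/-- `s` is the infimum of `A` within the subset `S` (w.r.t. the e-ring order). -/
def IsInfIn (S A : Set R) (s : R) : Prop :=
  s ∈ S ∧ (∀ a ∈ A, er.le s a) ∧ ∀ b ∈ S, (∀ a ∈ A, er.le b a) → er.le b s

/-- Quadratic annihilation property. -/
def HasQA : Prop := ∀ g ∈ er.G, ∀ h ∈ er.G, g * h ^ 2 * g = 0 → g * h = 0 ∧ h * g = 0

/-- Commutative Vigier property: every ascending sequence of pairwise commuting elements
of `G` bounded above in `G` has a supremum in `G` which double commutes with the sequence. -/
def HasCV : Prop :=
  ∀ g : ℕ → R, (∀ n, g n ∈ er.G) → (∀ n, er.le (g n) (g (n + 1))) →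
    (∀ m n, g m * g n = g n * g m) → (∃ b ∈ er.G, ∀ n, er.le (g n) b) →
    ∃ s, er.IsSupIn er.G (Set.range g) s ∧ s ∈ er.CC (Set.range g)

/-- `G` is an abstract Hermitian (AH) algebra: there is a semitransparent effect `½`,
`G` has quadratic annihilation, and `G` has the commutative Vigier property. -/
def IsAH : Prop := (∃ h ∈ er.E, h + h = 1) ∧ er.HasQA ∧ er.HasCV

end ERing

namespace ERing

variable {R : Type*} [Ring R] (er : ERing R)

/-- A state on `G`: an order-preserving additive map `ω : G → ℝ` with `ω(1) = 1`. -/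
def IsState (f : R → ℝ) : Prop :=
  (∀ g ∈ er.G, ∀ h ∈ er.G, f (g + h) = f g + f h) ∧
  (∀ g ∈ er.G, ∀ h ∈ er.G, er.le g h → f g ≤ f h) ∧ f 1 = 1

end ERing

section Aux
variable {R : Type*} [Ring R] (er : ERing R)

namespace ERing

theorem mem_Epos_of_E {x : R} (hx : x ∈ er.E) : x ∈ er.Epos :=
  AddSubmonoid.subset_closure hx

theorem zero_Epos : (0:R) ∈ er.Epos := AddSubmonoid.zero_mem _

theorem one_Epos : (1:R) ∈ er.Epos := er.mem_Epos_of_E er.one_mem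

theorem add_Epos {x y : R} (hx : x ∈ er.Epos) (hy : y ∈ er.Epos) : x + y ∈ er.Epos :=
  AddSubmonoid.add_mem _ hx hy

theorem nsmul_Epos (n : ℕ) {x : R} (hx : x ∈ er.Epos) : n • x ∈ er.Epos :=
  AddSubmonoid.nsmul_mem _ hx n

theorem Epos_subset_G : er.Epos ⊆ er.G := fun x hx =>
  ⟨x, hx, 0, er.zero_Epos, by simp⟩

theorem zero_G : (0:R) ∈ er.G := er.Epos_subset_G er.zero_Epos

theorem one_G : (1:R) ∈ er.G := er.Epos_subset_G er.one_Epos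

theorem neg_G {x : R} (hx : x ∈ er.G) : -x ∈ er.G := by
  obtain ⟨a, ha, b, hb, rfl⟩ := hx
  exact ⟨b, hb, a, ha, by abel⟩

theorem add_G {x y : R} (hx : x ∈ er.G) (hy : y ∈ er.G) : x + y ∈ er.G := by
  obtain ⟨a, ha, b, hb, rfl⟩ := hx
  obtain ⟨c, hc, d, hd, rfl⟩ := hy
  exact ⟨a + c, er.add_Epos ha hc, b + d, er.add_Epos hb hd, by abel⟩

theorem sub_G {x y : R} (hx : x ∈ er.G) (hy : y ∈ er.G) : x - y ∈ er.G := by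
  have := er.add_G hx (er.neg_G hy); simpa [sub_eq_add_neg] using this

theorem zsmul_G (n : ℤ) {x : R} (hx : x ∈ er.G) : n • x ∈ er.G := by
  induction n using Int.induction_on with
  | zero => simpa using er.zero_G
  | succ k ih => rw [add_smul, one_smul]; exact er.add_G ih hx
  | pred k ih =>
    rw [sub_smul, one_smul]; exact er.sub_G ih hx

theorem antisymm {x y : R} (h1 : er.le x y) (h2 : er.le y x) : x = y := by
  have h0 := er.epos_i _ h1 (by rw [neg_sub]; exact h2)
  exact (sub_eq_zero.mp h0).symm

/-- order unit property on `Epos`. -/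
theorem exists_nat_ub_Epos {a : R} (ha : a ∈ er.Epos) :
    ∃ n : ℕ, n • (1:R) - a ∈ er.Epos := by
  induction ha using AddSubmonoid.closure_induction with
  | mem x hx => exact ⟨1, by simpa using er.mem_Epos_of_E (er.compl_mem x hx)⟩
  | zero => exact ⟨0, by simpa using er.zero_Epos⟩
  | add x y _ _ ihx ihy =>
    obtain ⟨n, hn⟩ := ihx; obtain ⟨m, hm⟩ := ihy
    refine ⟨n + m, ?_⟩
    have := er.add_Epos hn hm
    have e : (n:ℕ) • (1:R) - x + (m • (1:R) - y) = (n + m) • (1:R) - (x + y) := by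
      rw [add_nsmul]; abel
    rwa [e] at this

theorem exists_nat_ub {x : R} (hx : x ∈ er.G) :
    ∃ n : ℕ, n • (1:R) - x ∈ er.Epos := by
  obtain ⟨a, ha, b, hb, rfl⟩ := hx
  obtain ⟨n, hn⟩ := er.exists_nat_ub_Epos ha
  refine ⟨n, ?_⟩
  have := er.add_Epos hn hb
  have e : (n:ℕ) • (1:R) - a + b = n • (1:R) - (a - b) := by abel
  rwa [e] at this

end ERing
end Aux
section Half
variable {R : Type*} [Ring R] (er : ERing R)

namespace ERing

theorem two_torsion_free {u : R} (hu : u + u = 1) (y : R) (hy : y + y = 0) : y = 0 := by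
  have h : y = u * (y + y) := by
    rw [mul_add]
    nth_rewrite 1 [← one_mul y]
    rw [← hu, add_mul]
  rw [hy, mul_zero] at h; exact h

theorem half_central {u : R} (hu : u + u = 1) (x : R) : u * x = x * u := by
  have h : (u * x - x * u) + (u * x - x * u) = 0 := by
    have h1 : u * x + u * x = x := by rw [← add_mul, hu, one_mul]
    have h2 : x * u + x * u = x := by rw [← mul_add, hu, mul_one]
    calc (u * x - x * u) + (u * x - x * u) = (u*x + u*x) - (x*u + x*u) := by abel
    _ = 0 := by rw [h1, h2, sub_self]
  exact sub_eq_zero.mp (two_torsion_free hu _ h)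

theorem half_Epos {u : R} (huE : u ∈ er.E) : u ∈ er.Epos := er.mem_Epos_of_E huE

theorem halfpow_Epos {u : R} (huE : u ∈ er.E) (hu : u + u = 1) (j : ℕ) :
    u ^ j ∈ er.Epos := by
  induction j with
  | zero => simpa using er.one_Epos
  | succ n ih =>
    rw [pow_succ]
    exact er.epos_iii _ ih _ (er.half_Epos huE) (half_central hu _).symm

theorem half_mul_Epos {u : R} (huE : u ∈ er.E) (hu : u + u = 1)
    {a : R} (ha : a ∈ er.Epos) : u * a ∈ er.Epos := by
  have h4 : u * a * u ∈ er.Epos := er.epos_iv _ (er.half_Epos huE) _ ha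
  have he : u * a * u + u * a * u = u * a := by
    rw [← mul_add (u*a), hu, mul_one]
  have := er.add_Epos h4 h4
  rwa [he] at this

theorem halfpow_mul_Epos {u : R} (huE : u ∈ er.E) (hu : u + u = 1) (j : ℕ)
    {a : R} (ha : a ∈ er.Epos) : u ^ j * a ∈ er.Epos := by
  induction j with
  | zero => simpa using ha
  | succ n ih =>
    have he : u ^ (n+1) * a = u * (u ^ n * a) := by
      rw [pow_succ']; rw [mul_assoc]
    rw [he]
    exact er.half_mul_Epos huE hu ih

theorem half_G {u : R} (huE : u ∈ er.E) (hu : u + u = 1) {x : R} (hx : x ∈ er.G) :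
    u * x ∈ er.G := by
  obtain ⟨a, ha, b, hb, rfl⟩ := hx
  exact ⟨u*a, er.half_mul_Epos huE hu ha, u*b, er.half_mul_Epos huE hu hb, by rw [mul_sub]⟩

/-- `2 • (u^(j+1) * x) = u^j * x`. -/
theorem double_halfpow {u : R} (hu : u + u = 1) (j : ℕ) (x : R) :
    u ^ (j+1) * x + u ^ (j+1) * x = u ^ j * x := by
  rw [← add_mul, pow_succ, ← mul_add, hu, mul_one]

/-- rescaling: `m • (u^j * x) = (m * 2^i) • (u^(j+i) * x)`. -/
theorem rescale {u : R} (hu : u + u = 1) (m : ℤ) (j i : ℕ) (x : R) :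
    m • (u ^ j * x) = (m * 2 ^ i) • (u ^ (j+i) * x) := by
  induction i with
  | zero => simp
  | succ n ih =>
    rw [ih]
    have h2 : (2:ℤ) • (u ^ (j+n+1) * x) = u ^ (j+n) * x := by
      rw [two_smul]; exact double_halfpow hu (j+n) x
    calc (m * 2^n) • (u^(j+n) * x) = (m * 2^n) • ((2:ℤ) • (u ^ (j+n+1) * x)) := by rw [h2]
    _ = (m * 2^(n+1)) • (u ^ (j+(n+1)) * x) := by
        rw [smul_smul]; ring_nf

end ERing
end Half
section Arch
namespace ERing
variable {R : Type*} [Ring R]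

theorem zsmul_Epos (er : ERing R) {m : ℤ} (hm : 0 ≤ m) {a : R} (ha : a ∈ er.Epos) :
    m • a ∈ er.Epos := by
  lift m to ℕ using hm
  rw [natCast_zsmul]
  exact er.nsmul_Epos _ ha

theorem pos_smul_one_ne_zero (er : ERing R) {n : ℤ} (hn : 0 < n) : n • (1:R) ≠ 0 := by
  intro h
  have h1 : (n - 1) • (1:R) = -1 := by
    rw [sub_smul, h, one_smul]; abel
  have h2 : (-1:R) ∈ er.Epos := by
    rw [← h1]; exact er.zsmul_Epos (by omega) er.one_Epos
  have := er.epos_i _ er.one_Epos h2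
  exact er.zero_ne_one this.symm

theorem smul_one_eq {u : R} (hu : u + u = 1) (m : ℤ) (j : ℕ) :
    m • (1:R) = (m * 2 ^ j) • (u ^ j) := by
  have h2 := rescale hu m 0 j (1:R)
  simpa using h2

theorem coeff_nonneg (er : ERing R) {u : R} (huE : u ∈ er.E) (hu : u + u = 1) {m : ℤ} {j : ℕ}
    (h : m • (u ^ j : R) ∈ er.Epos) : 0 ≤ m := by
  by_contra hm
  push_neg at hm
  have hneg : -(m • (u ^ j : R)) ∈ er.Epos := by
    rw [← neg_smul]
    exact er.zsmul_Epos (by omega) (er.halfpow_Epos huE hu j)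
  have h0 : m • (u ^ j : R) = 0 := er.epos_i _ h hneg
  have h1 : m • (1:R) = (2 ^ j : ℤ) • (m • (u ^ j : R)) := by
    rw [smul_smul, smul_one_eq hu m j, mul_comm]
  rw [h0, smul_zero] at h1
  have h2 : (-m) • (1:R) = 0 := by rw [neg_smul, h1, neg_zero]
  exact er.pos_smul_one_ne_zero (by omega) h2

/-- Archimedean property via the commutative Vigier property. -/
theorem arch (er : ERing R) {u : R} (huE : u ∈ er.E) (hu : u + u = 1) (hCV : er.HasCV)
    {x : R} (hx : x ∈ er.G) (h : ∀ j : ℕ, x + u ^ j ∈ er.Epos) : x ∈ er.Epos := by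
  set g : ℕ → R := fun j => -(u ^ j) with hg
  have hgG : ∀ n, g n ∈ er.G := fun n => er.neg_G (er.Epos_subset_G (er.halfpow_Epos huE hu n))
  have hdbl : ∀ j : ℕ, (u:R) ^ (j+1) + u ^ (j+1) = u ^ j := by
    intro j
    have := double_halfpow hu j (1:R)
    simpa using this
  have hasc : ∀ n, er.le (g n) (g (n + 1)) := by
    intro n
    show g (n+1) - g n ∈ er.Epos
    have e : g (n+1) - g n = u ^ (n+1) := by
      simp only [hg]
      rw [← hdbl n]; abel
    rw [e]; exact er.halfpow_Epos huE hu (n+1)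
  have hcomm : ∀ m n, g m * g n = g n * g m := by
    intro m n; simp only [hg, neg_mul, mul_neg, neg_neg]
    rw [((Commute.refl u).pow_pow m n).eq]
  have hbdd : ∃ b ∈ er.G, ∀ n, er.le (g n) b := by
    refine ⟨0, er.zero_G, fun n => ?_⟩
    show (0:R) - g n ∈ er.Epos
    simp only [hg, zero_sub, neg_neg]
    exact er.halfpow_Epos huE hu n
  obtain ⟨s, ⟨hsG, hsub, hslub⟩, -⟩ := hCV g hgG hasc hcomm hbdd
  have husG : u * s ∈ er.G := er.half_G huE hu hsG
  have hub' : ∀ a ∈ Set.range g, er.le a (u * s) := by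
    rintro - ⟨j, rfl⟩
    show u * s - g j ∈ er.Epos
    have hj : s - g j ∈ er.Epos := hsub (g j) ⟨j, rfl⟩
    have key : u * s - g j = u * (s - g j) + u ^ (j+1) := by
      simp only [hg]
      have hp : u * (u ^ j) = u ^ (j+1) := (pow_succ' u j).symm
      rw [mul_sub, mul_neg, hp, ← hdbl j]
      abel
    rw [key]
    exact er.add_Epos (er.half_mul_Epos huE hu hj) (er.halfpow_Epos huE hu (j+1))
  have hleast' : ∀ b ∈ er.G, (∀ a ∈ Set.range g, er.le a b) → er.le (u * s) b := by
    intro b hbG hb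
    have hbb : b + b ∈ er.G := er.add_G hbG hbG
    have hub2 : ∀ a ∈ Set.range g, er.le a (b + b) := by
      rintro - ⟨j, rfl⟩
      show b + b - g j ∈ er.Epos
      have h1 : b - g (j+1) ∈ er.Epos := hb (g (j+1)) ⟨j+1, rfl⟩
      have key : b + b - g j = (b - g (j+1)) + (b - g (j+1)) := by
        simp only [hg]
        rw [← hdbl j]; abel
      rw [key]; exact er.add_Epos h1 h1
    have hs2 : er.le s (b + b) := hslub (b+b) hbb hub2
    show b - u * s ∈ er.Epos
    have e : u * (b + b - s) = b - u * s := by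
      have hbe : u * b + u * b = b := by rw [← add_mul, hu, one_mul]
      rw [mul_sub, mul_add, hbe]
    rw [← e]
    exact er.half_mul_Epos huE hu hs2
  have h1 : er.le s (u * s) := hslub (u*s) husG hub'
  have h2 : er.le (u * s) s := hleast' s hsG hsub
  have hs_eq : u * s = s := er.antisymm h2 h1
  have hs0 : s = 0 := by
    have hss : u * s + u * s = s := by rw [← add_mul, hu, one_mul]
    rw [hs_eq] at hss
    have h' : s + s = s + 0 := by rw [add_zero]; exact hss
    exact add_left_cancel h'
  have hxub : ∀ a ∈ Set.range g, er.le a x := by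
    rintro - ⟨j, rfl⟩
    show x - g j ∈ er.Epos
    have e : x - g j = x + u ^ j := by simp only [hg]; abel
    rw [e]; exact h j
  have := hslub x hx hxub
  rw [hs0] at this
  simpa [ERing.le] using this

theorem arch' (er : ERing R) {u : R} (huE : u ∈ er.E) (hu : u + u = 1) (hCV : er.HasCV) (N : ℕ)
    {x : R} (hx : x ∈ er.G) (h : ∀ j : ℕ, x + (N:ℤ) • (u ^ j) ∈ er.Epos) : x ∈ er.Epos := by
  apply er.arch huE hu hCV hx
  intro j
  obtain ⟨t, ht⟩ : ∃ t : ℕ, (N:ℤ) ≤ 2 ^ t :=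
    ⟨N, by exact_mod_cast (Nat.lt_two_pow_self (n := N)).le⟩
  have h1 : (u ^ j : R) = (2^t : ℤ) • u ^ (j+t) := by
    simpa using rescale hu 1 j t (1:R)
  have key : x + u ^ j = (x + (N:ℤ) • u ^ (j + t)) + ((2^t - N : ℤ)) • u ^ (j+t) := by
    rw [h1, sub_smul]
    abel
  rw [key]
  exact er.add_Epos (h (j+t)) (er.zsmul_Epos (by omega) (er.halfpow_Epos huE hu (j+t)))

/-- Unperforation: if `n • x ≥ 0` then `x ≥ 0`. -/
theorem unperf (er : ERing R) {u : R} (huE : u ∈ er.E) (hu : u + u = 1) (hCV : er.HasCV)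
    {n : ℕ} (hn : 1 ≤ n) {x : R} (hx : x ∈ er.G) (h : (n:ℤ) • x ∈ er.Epos) :
    x ∈ er.Epos := by
  obtain ⟨M, hM⟩ := er.exists_nat_ub (er.neg_G hx)
  have hM' : (M:ℤ) • (1:R) + x ∈ er.Epos := by
    have e : (M:ℕ) • (1:R) - -x = (M:ℤ) • (1:R) + x := by
      rw [natCast_zsmul]; abel
    rwa [e] at hM
  have key : ∀ t : ℕ, (2^t : ℤ) • x + ((n*M : ℕ):ℤ) • (1:R) ∈ er.Epos := by
    intro t
    set q : ℤ := (2^t : ℤ) / n with hq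
    set r : ℤ := (2^t : ℤ) % n with hr
    have hn0 : (0:ℤ) < n := by exact_mod_cast hn
    have hdiv : (2^t : ℤ) = q * n + r := by
      rw [hq, hr, mul_comm]; exact (Int.mul_ediv_add_emod _ _).symm
    have hr0 : 0 ≤ r := Int.emod_nonneg _ (by omega)
    have hrn : r < n := Int.emod_lt_of_pos _ hn0
    have hq0 : 0 ≤ q := Int.ediv_nonneg (by positivity) (by omega)
    have e : (2^t : ℤ) • x + ((n*M : ℕ):ℤ) • (1:R) =
        q • ((n:ℤ) • x) + r • ((M:ℤ) • (1:R) + x) + ((n - r) * M) • (1:R) := by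
      rw [smul_smul, smul_add, smul_smul]
      rw [hdiv]
      push_cast
      rw [add_smul, sub_mul, sub_smul, mul_comm q (n:ℤ)]
      abel
    rw [e]
    refine er.add_Epos (er.add_Epos ?_ ?_) ?_
    · exact er.zsmul_Epos hq0 h
    · exact er.zsmul_Epos hr0 hM'
    · exact er.zsmul_Epos (by nlinarith) er.one_Epos
  apply er.arch' huE hu hCV (n*M) hx
  intro t
  have hk := er.halfpow_mul_Epos huE hu t (key t)
  have e : u ^ t * ((2^t : ℤ) • x + ((n*M : ℕ):ℤ) • (1:R)) = x + ((n*M:ℕ):ℤ) • u ^ t := by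
    rw [mul_add, mul_smul_comm, mul_smul_comm, mul_one]
    congr 1
    have h2 : x = (2^t : ℤ) • (u ^ t * x) := by simpa using rescale hu 1 0 t x
    rw [← h2]
  rwa [e] at hk

end ERing
end Arch
section Pfun
namespace ERing
variable {R : Type*} [Ring R]

/-- shifting the dyadic representation -/
theorem halfpow_shift {u : R} (hu : u + u = 1) (m : ℤ) (j i : ℕ) :
    m • (u ^ j : R) = (m * 2 ^ i) • (u ^ (j+i)) := by
  simpa using rescale hu m j i (1:R)

theorem dyadic_dense (c ε : ℝ) (hε : 0 < ε) :
    ∃ (m : ℤ) (j : ℕ), c < (m:ℝ)/2^j ∧ (m:ℝ)/2^j ≤ c + ε := by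
  obtain ⟨j, hj⟩ := pow_unbounded_of_one_lt (1/ε) (by norm_num : (1:ℝ) < 2)
  have h2 : (0:ℝ) < 2^j := by positivity
  refine ⟨⌊c * 2^j⌋ + 1, j, ?_, ?_⟩
  · rw [lt_div_iff₀ h2]
    push_cast
    exact Int.lt_floor_add_one _
  · rw [div_le_iff₀ h2]
    push_cast
    have h3 : (⌊c * 2^j⌋ : ℝ) ≤ c * 2^j := Int.floor_le _
    have h4 : (1:ℝ) ≤ ε * 2^j := by
      rw [div_lt_iff₀ hε] at hj
      nlinarith
    nlinarith

/-- the upper dyadic set of `x`. -/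
def pSet (er : ERing R) (u : R) (x : R) : Set ℝ :=
  {t | ∃ (m : ℤ) (j : ℕ), t = (m:ℝ)/2^j ∧ m • (u^j : R) - x ∈ er.Epos}

/-- the upper envelope functional. -/
noncomputable def pfun (er : ERing R) (u : R) (x : R) : ℝ := sInf (er.pSet u x)

theorem pSet_nonempty (er : ERing R) (u : R) {x : R} (hx : x ∈ er.G) :
    (er.pSet u x).Nonempty := by
  obtain ⟨n, hn⟩ := er.exists_nat_ub hx
  refine ⟨(n:ℝ), (n:ℤ), 0, by norm_num, ?_⟩
  simpa [natCast_zsmul] using hn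

theorem pSet_bdd (er : ERing R) {u : R} (huE : u ∈ er.E) (hu : u + u = 1)
    {x : R} (hx : x ∈ er.G) : BddBelow (er.pSet u x) := by
  obtain ⟨N, hN⟩ := er.exists_nat_ub (er.neg_G hx)
  have hN' : (N:ℤ) • (1:R) + x ∈ er.Epos := by
    have e : (N:ℕ) • (1:R) - -x = (N:ℤ) • (1:R) + x := by rw [natCast_zsmul]; abel
    rwa [e] at hN
  refine ⟨-(N:ℝ), ?_⟩
  rintro - ⟨m, j, rfl, hm⟩
  have hsum : (m + N * 2^j) • (u^j : R) ∈ er.Epos := by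
    have := er.add_Epos hm hN'
    have e : m • (u^j:R) - x + ((N:ℤ) • (1:R) + x) = (m + N * 2^j) • (u^j : R) := by
      rw [add_smul, smul_one_eq hu (N:ℤ) j]
      abel
    rwa [e] at this
  have hco : (0:ℤ) ≤ m + N * 2^j := er.coeff_nonneg huE hu hsum
  have h2 : (0:ℝ) < 2^j := by positivity
  rw [le_div_iff₀ h2]
  have hr : (0:ℝ) ≤ (m:ℝ) + (N:ℝ) * 2^j := by exact_mod_cast hco
  nlinarith

theorem pfun_le (er : ERing R) {u : R} (huE : u ∈ er.E) (hu : u + u = 1)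
    {x : R} (hx : x ∈ er.G) {m : ℤ} {j : ℕ} (h : m • (u^j : R) - x ∈ er.Epos) :
    er.pfun u x ≤ (m:ℝ)/2^j :=
  csInf_le (er.pSet_bdd huE hu hx) ⟨m, j, rfl, h⟩

theorem le_pfun (er : ERing R) (u : R) {x : R} (hx : x ∈ er.G) {c : ℝ}
    (h : ∀ (m : ℤ) (j : ℕ), m • (u^j : R) - x ∈ er.Epos → c ≤ (m:ℝ)/2^j) :
    c ≤ er.pfun u x :=
  le_csInf (er.pSet_nonempty u hx) (by rintro - ⟨m, j, rfl, hm⟩; exact h m j hm)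

theorem pfun_nonpos (er : ERing R) {u : R} (huE : u ∈ er.E) (hu : u + u = 1)
    {x : R} (hx : x ∈ er.G) (h : -x ∈ er.Epos) : er.pfun u x ≤ 0 := by
  have := er.pfun_le huE hu hx (m := 0) (j := 0) (by simpa using h)
  simpa using this

theorem pfun_zero (er : ERing R) {u : R} (huE : u ∈ er.E) (hu : u + u = 1) :
    er.pfun u 0 = 0 := by
  refine le_antisymm (er.pfun_nonpos huE hu er.zero_G (by simpa using er.zero_Epos)) ?_
  refine er.le_pfun u er.zero_G fun m j hm => ?_
  rw [sub_zero] at hm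
  have h0 := er.coeff_nonneg huE hu hm
  have h1 : (0:ℝ) ≤ (m:ℝ) := by exact_mod_cast h0
  positivity

theorem pfun_one (er : ERing R) {u : R} (huE : u ∈ er.E) (hu : u + u = 1) :
    er.pfun u 1 = 1 := by
  refine le_antisymm ?_ ?_
  · have := er.pfun_le huE hu er.one_G (m := 1) (j := 0) (by simpa using er.zero_Epos)
    simpa using this
  · refine er.le_pfun u er.one_G fun m j hm => ?_
    have e1 : (1:R) = (2^j : ℤ) • (u^j) := by
      have := smul_one_eq hu 1 j
      simpa using this
    have e2 : m • (u^j:R) - 1 = (m - 2^j) • (u^j) := by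
      rw [sub_smul]
      nth_rewrite 1 [e1]
      abel
    rw [e2] at hm
    have h0 := er.coeff_nonneg huE hu hm
    have h2 : (0:ℝ) < 2^j := by positivity
    rw [le_div_iff₀ h2]
    have : ((2:ℤ)^j : ℝ) ≤ (m:ℝ) := by exact_mod_cast (by omega : (2:ℤ)^j ≤ m)
    push_cast at this ⊢
    linarith

theorem pfun_neg_one (er : ERing R) {u : R} (huE : u ∈ er.E) (hu : u + u = 1) :
    er.pfun u (-1) ≤ -1 := by
  have := er.pfun_le huE hu (er.neg_G er.one_G) (m := -1) (j := 0)
    (by simpa using er.zero_Epos)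
  simpa using this

theorem pfun_mono (er : ERing R) {u : R} (huE : u ∈ er.E) (hu : u + u = 1)
    {x y : R} (hx : x ∈ er.G) (hy : y ∈ er.G) (h : y - x ∈ er.Epos) :
    er.pfun u x ≤ er.pfun u y := by
  refine le_csInf (er.pSet_nonempty u hy) ?_
  rintro - ⟨m, j, rfl, hm⟩
  refine er.pfun_le huE hu hx ?_
  have := er.add_Epos hm h
  have e : m • (u^j:R) - y + (y - x) = m • (u^j:R) - x := by abel
  rwa [e] at this

theorem pfun_add (er : ERing R) {u : R} (huE : u ∈ er.E) (hu : u + u = 1)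
    {x y : R} (hx : x ∈ er.G) (hy : y ∈ er.G) :
    er.pfun u (x + y) ≤ er.pfun u x + er.pfun u y := by
  have hxy : x + y ∈ er.G := er.add_G hx hy
  have key : ∀ t ∈ er.pSet u x, ∀ t' ∈ er.pSet u y, er.pfun u (x+y) ≤ t + t' := by
    rintro - ⟨m, j, rfl, hm⟩ - ⟨m', j', rfl, hm'⟩
    have hmem : (m * 2^j' + m' * 2^j) • (u^(j+j') : R) - (x + y) ∈ er.Epos := by
      have := er.add_Epos hm hm'
      have e : m • (u^j:R) - x + (m' • (u^j':R) - y)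
          = (m * 2^j' + m' * 2^j) • (u^(j+j') : R) - (x + y) := by
        rw [add_smul, ← halfpow_shift hu m j j']
        have e2 : (m' * 2^j) • (u^(j+j') : R) = m' • (u^j' : R) := by
          rw [add_comm j j']
          exact (halfpow_shift hu m' j' j).symm
        rw [e2]
        abel
      rwa [e] at this
    have := er.pfun_le huE hu hxy hmem
    have e3 : ((m * 2^j' + m' * 2^j : ℤ):ℝ)/2^(j+j') = (m:ℝ)/2^j + (m':ℝ)/2^j' := by
      have h1 : ((2:ℝ))^j ≠ 0 := by positivity
      have h2 : ((2:ℝ))^j' ≠ 0 := by positivity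
      push_cast
      rw [pow_add, div_add_div _ _ h1 h2]
      ring
    rwa [e3] at this
  have h2 : ∀ t ∈ er.pSet u x, er.pfun u (x+y) - t ≤ er.pfun u y := by
    intro t ht
    refine le_csInf (er.pSet_nonempty u hy) fun t' ht' => ?_
    have := key t ht t' ht'
    linarith
  have h3 : er.pfun u (x+y) - er.pfun u y ≤ er.pfun u x := by
    refine le_csInf (er.pSet_nonempty u hx) fun t ht => ?_
    have := h2 t ht
    linarith
  linarith

theorem pfun_half (er : ERing R) {u : R} (huE : u ∈ er.E) (hu : u + u = 1)
    {x : R} (hx : x ∈ er.G) : er.pfun u (u * x) = er.pfun u x / 2 := by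
  have hux : u * x ∈ er.G := er.half_G huE hu hx
  refine le_antisymm ?_ ?_
  · -- pfun (u x) ≤ pfun x / 2
    have : ∀ t ∈ er.pSet u x, er.pfun u (u*x) ≤ t/2 := by
      rintro - ⟨m, j, rfl, hm⟩
      have hmem : m • (u^(j+1) : R) - u * x ∈ er.Epos := by
        have := er.half_mul_Epos huE hu hm
        have e : u * (m • (u^j:R) - x) = m • (u^(j+1) : R) - u * x := by
          rw [mul_sub, mul_smul_comm, ← pow_succ']
        rwa [e] at this
      have := er.pfun_le huE hu hux hmem
      have e2 : ((m:ℝ))/2^(j+1) = (m:ℝ)/2^j/2 := by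
        rw [pow_succ]; field_simp
      rwa [e2] at this
    have h2 : er.pfun u (u*x) * 2 ≤ er.pfun u x := by
      refine le_csInf (er.pSet_nonempty u hx) fun t ht => ?_
      have := this t ht
      linarith
    linarith
  · -- pfun x / 2 ≤ pfun (u x)
    have : ∀ t ∈ er.pSet u (u*x), er.pfun u x ≤ 2*t := by
      rintro - ⟨m, j, rfl, hm⟩
      have hmem : (2*m) • (u^j : R) - x ∈ er.Epos := by
        have := er.add_Epos hm hm
        have e : m • (u^j:R) - u*x + (m • (u^j:R) - u*x) = (2*m) • (u^j : R) - x := by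
          have e1 : u*x + u*x = x := by rw [← add_mul, hu, one_mul]
          have e0 : m • (u^j:R) - u*x + (m • (u^j:R) - u*x)
              = (m • (u^j:R) + m • (u^j:R)) - (u*x + u*x) := by abel
          rw [e0, e1, two_mul, add_smul]
        rwa [e] at this
      have := er.pfun_le huE hu hx hmem
      have e2 : ((2*m : ℤ):ℝ)/2^j = 2*((m:ℝ)/2^j) := by push_cast; ring
      rwa [e2] at this
    refine le_csInf (er.pSet_nonempty u hux) fun t ht => ?_
    have h3 := this t ht
    linarith


theorem halfpow_G (er : ERing R) {u : R} (huE : u ∈ er.E) (hu : u + u = 1) (j : ℕ) :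
    (u^j : R) ∈ er.G := er.Epos_subset_G (er.halfpow_Epos huE hu j)

theorem halfpow_mul_G (er : ERing R) {u : R} (huE : u ∈ er.E) (hu : u + u = 1) (j : ℕ)
    {x : R} (hx : x ∈ er.G) : u^j * x ∈ er.G := by
  induction j with
  | zero => simpa using hx
  | succ n ih =>
    have e : u ^ (n+1) * x = u * (u ^ n * x) := by rw [pow_succ']; rw [mul_assoc]
    rw [e]; exact er.half_G huE hu ih

theorem pfun_halfpow (er : ERing R) {u : R} (huE : u ∈ er.E) (hu : u + u = 1) (j : ℕ)
    {x : R} (hx : x ∈ er.G) : er.pfun u (u^j * x) = er.pfun u x / 2^j := by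
  induction j with
  | zero => simp
  | succ n ih =>
    have e : u ^ (n+1) * x = u * (u ^ n * x) := by rw [pow_succ']; rw [mul_assoc]
    rw [e, er.pfun_half huE hu (er.halfpow_mul_G huE hu n hx), ih, pow_succ]
    ring

theorem pfun_nsmul_le (er : ERing R) {u : R} (huE : u ∈ er.E) (hu : u + u = 1)
    (n : ℕ) {x : R} (hx : x ∈ er.G) :
    er.pfun u ((n:ℤ) • x) ≤ (n:ℝ) * er.pfun u x := by
  induction n with
  | zero => simp [er.pfun_zero huE hu]
  | succ k ih =>
    have e : ((k+1 : ℕ):ℤ) • x = (k:ℤ) • x + x := by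
      push_cast
      rw [add_smul, one_smul]
    rw [e]
    have := er.pfun_add huE hu (er.zsmul_G (k:ℤ) hx) hx
    push_cast
    linarith

theorem pfun_nsmul (er : ERing R) {u : R} (huE : u ∈ er.E) (hu : u + u = 1)
    (hCV : er.HasCV) {n : ℕ} (hn : 1 ≤ n) {x : R} (hx : x ∈ er.G) :
    er.pfun u ((n:ℤ) • x) = (n:ℝ) * er.pfun u x := by
  refine le_antisymm (er.pfun_nsmul_le huE hu n hx) ?_
  have hn0 : (0:ℝ) < n := by exact_mod_cast hn
  refine er.le_pfun u (er.zsmul_G _ hx) fun m j hm => ?_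
  have key : er.pfun u x ≤ (m:ℝ) / ((n:ℝ) * 2^j) := by
    refine le_of_forall_pos_le_add fun ε hε => ?_
    obtain ⟨m', j', hlt, hle⟩ := dyadic_dense ((m:ℝ) / ((n:ℝ) * 2^j)) ε hε
    have h2j : (0:ℝ) < 2^j := by positivity
    have h2j' : (0:ℝ) < 2^j' := by positivity
    have hr : (m:ℝ) * 2^j' < (n:ℝ) * (m':ℝ) * 2^j := by
      rw [div_lt_div_iff₀ (by positivity) h2j'] at hlt
      nlinarith
    have hint : (m:ℤ) * 2^j' ≤ (n:ℤ) * m' * 2^j := by exact_mod_cast hr.le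
    -- show m' • u^j' - x ∈ Epos via unperforation
    have hyG : m' • (u^j' : R) - x ∈ er.G :=
      er.sub_G (er.zsmul_G _ (er.halfpow_G huE hu j')) hx
    have hsmul : (n:ℤ) • (m' • (u^j' : R) - x) ∈ er.Epos := by
      have e : (n:ℤ) • (m' • (u^j' : R) - x)
          = ((n:ℤ) * m' * 2^j - m * 2^j') • (u^(j+j') : R) + (m • (u^j:R) - (n:ℤ) • x) := by
        rw [smul_sub, smul_smul]
        have e1 : ((n:ℤ) * m') • (u^j' : R) = ((n:ℤ) * m' * 2^j) • (u^(j+j')) := by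
          rw [add_comm j j']
          exact halfpow_shift hu _ j' j
        have e2 : m • (u^j : R) = (m * 2^j') • (u^(j+j')) := halfpow_shift hu m j j'
        rw [e1, sub_smul, e2]
        abel
      rw [e]
      refine er.add_Epos (er.zsmul_Epos (by omega) (er.halfpow_Epos huE hu _)) hm
    have hmem := er.unperf huE hu hCV hn hyG hsmul
    have := er.pfun_le huE hu hx hmem
    linarith
  have e4 : (n:ℝ) * ((m:ℝ) / ((n:ℝ) * 2^j)) = (m:ℝ)/2^j := by
    field_simp
  calc (n:ℝ) * er.pfun u x ≤ (n:ℝ) * ((m:ℝ) / ((n:ℝ) * 2^j)) := by nlinarith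
  _ = (m:ℝ)/2^j := e4

/-- dyadic homogeneity of `pfun`. -/
theorem pfun_dy (er : ERing R) {u : R} (huE : u ∈ er.E) (hu : u + u = 1)
    (hCV : er.HasCV) {n : ℕ} (hn : 1 ≤ n) (j : ℕ) {x : R} (hx : x ∈ er.G) :
    er.pfun u ((n:ℤ) • (u^j * x)) = (n:ℝ)/2^j * er.pfun u x := by
  rw [er.pfun_nsmul huE hu hCV hn (er.halfpow_mul_G huE hu j hx),
    er.pfun_halfpow huE hu j hx]
  ring

/-- `q ≤ p`. -/
theorem neg_pfun_neg_le (er : ERing R) {u : R} (huE : u ∈ er.E) (hu : u + u = 1)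
    {x : R} (hx : x ∈ er.G) : -er.pfun u (-x) ≤ er.pfun u x := by
  have h0 := er.pfun_add huE hu hx (er.neg_G hx)
  rw [add_neg_cancel, er.pfun_zero huE hu] at h0
  linarith

end ERing
end Pfun
section Graph
namespace ERing
variable {R : Type*} [Ring R]

/-- A "good" partial-state graph. -/
def Good (er : ERing R) (u k : R) (Γ : Set (R × ℝ)) : Prop :=
  (∀ a ∈ Γ, ∀ b ∈ Γ, a + b ∈ Γ) ∧
  (∀ a ∈ Γ, -a ∈ Γ) ∧
  (((0:R), (0:ℝ)) ∈ Γ) ∧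
  (∀ a ∈ Γ, ((u * a.1, a.2 / 2) : R × ℝ) ∈ Γ) ∧
  (∀ a ∈ Γ, a.1 ∈ er.G) ∧
  (∀ a ∈ Γ, a.2 ≤ er.pfun u a.1) ∧
  ((k, -er.pfun u (-k)) ∈ Γ)

theorem Good.uniq {er : ERing R} {u k : R} (huE : u ∈ er.E) (hu : u + u = 1)
    {Γ : Set (R × ℝ)} (hΓ : Good er u k Γ) {x : R} {r r' : ℝ}
    (h1 : (x, r) ∈ Γ) (h2 : (x, r') ∈ Γ) : r = r' := by
  obtain ⟨hadd, hneg, -, -, -, hle, -⟩ := hΓ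
  have hmem : ((x, r) + -(x, r') : R × ℝ) ∈ Γ := hadd _ h1 _ (hneg _ h2)
  have hmem' : ((x, r') + -(x, r) : R × ℝ) ∈ Γ := hadd _ h2 _ (hneg _ h1)
  have e1 := hle _ hmem
  have e2 := hle _ hmem'
  simp only [Prod.fst_add, Prod.snd_add, Prod.fst_neg, Prod.snd_neg, add_neg_cancel] at e1 e2
  rw [er.pfun_zero huE hu] at e1 e2
  linarith

theorem Good.zsmul {er : ERing R} {u k : R} {Γ : Set (R × ℝ)} (hΓ : Good er u k Γ)
    {x : R} {r : ℝ} (h : (x, r) ∈ Γ) (m : ℤ) : (m • x, (m:ℝ) * r) ∈ Γ := by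
  obtain ⟨hadd, hneg, hzero, -, -, -, -⟩ := hΓ
  induction m using Int.induction_on with
  | zero => simpa using hzero
  | succ i ih =>
    have h2 := hadd _ ih _ h
    have e : (((i:ℤ) • x, (((i:ℤ)):ℝ) * r) + (x, r) : R × ℝ)
        = (((i:ℤ)+1) • x, ((((i:ℤ)+1 : ℤ)):ℝ) * r) := by
      rw [Prod.mk_add_mk, Prod.mk.injEq]
      constructor
      · rw [add_smul, one_smul]
      · push_cast; ring
    rw [e] at h2
    convert h2 using 2 <;> push_cast <;> ring
  | pred i ih =>
    have h2 := hadd _ ih _ (hneg _ h)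
    have e : (((-i:ℤ) • x, (((-i:ℤ)):ℝ) * r) + -((x, r) : R × ℝ) : R × ℝ)
        = (((-i:ℤ)-1) • x, ((((-i:ℤ)-1 : ℤ)):ℝ) * r) := by
      rw [Prod.neg_mk, Prod.mk_add_mk, Prod.mk.injEq]
      constructor
      · rw [sub_smul, one_smul, sub_eq_add_neg]
      · push_cast; ring
    rw [e] at h2
    convert h2 using 2 <;> push_cast <;> ring

theorem Good.dy {er : ERing R} {u k : R} {Γ : Set (R × ℝ)} (hΓ : Good er u k Γ)
    {x : R} {r : ℝ} (h : (x, r) ∈ Γ) (m : ℤ) (j : ℕ) :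
    (m • (u^j * x), (m:ℝ)/2^j * r) ∈ Γ := by
  have hpow : ∀ i : ℕ, (u^i * x, r / 2^i) ∈ Γ := by
    intro i
    induction i with
    | zero => simpa using h
    | succ n ih =>
      have := hΓ.2.2.2.1 _ ih
      have e : u ^ (n+1) * x = u * (u ^ n * x) := by rw [pow_succ']; rw [mul_assoc]
      rw [e, pow_succ]
      simpa [div_div] using this
  have := hΓ.zsmul (hpow j) m
  have e : (m:ℝ) * (r / 2^j) = (m:ℝ)/2^j * r := by ring
  rwa [e] at this

theorem Good.initial (er : ERing R) {u : R} (huE : u ∈ er.E) (hu : u + u = 1)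
    (hCV : er.HasCV) {k : R} (hk : k ∈ er.G) :
    Good er u k {q | ∃ (m : ℤ) (j : ℕ),
      q = ((m • (u^j * k) : R), (m:ℝ)/2^j * (-er.pfun u (-k)))} := by
  set qk : ℝ := -er.pfun u (-k) with hqk
  refine ⟨?_, ?_, ?_, ?_, ?_, ?_, ?_⟩
  · rintro - ⟨m, j, rfl⟩ - ⟨m', j', rfl⟩
    refine ⟨m * 2^j' + m' * 2^j, j + j', ?_⟩
    have e1 : m • ((u:R)^j * k) + m' • (u^j' * k) = (m * 2^j' + m' * 2^j) • (u^(j+j') * k) := by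
      rw [add_smul, ← rescale hu m j j' k]
      congr 1
      rw [add_comm j j']
      exact rescale hu m' j' j k
    have e2 : (m:ℝ)/2^j * qk + (m':ℝ)/2^j' * qk
        = ((m * 2^j' + m' * 2^j : ℤ):ℝ)/2^(j+j') * qk := by
      have h1 : ((2:ℝ))^j ≠ 0 := by positivity
      have h2 : ((2:ℝ))^j' ≠ 0 := by positivity
      push_cast
      rw [pow_add]
      field_simp
    rw [Prod.mk_add_mk, e1, e2]
  · rintro - ⟨m, j, rfl⟩
    refine ⟨-m, j, ?_⟩
    rw [Prod.neg_mk, neg_smul]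
    push_cast
    rw [neg_div, neg_mul]
  · exact ⟨0, 0, by norm_num⟩
  · rintro - ⟨m, j, rfl⟩
    refine ⟨m, j+1, ?_⟩
    have e1 : u * (m • ((u:R)^j * k)) = m • (u^(j+1) * k) := by
      rw [mul_smul_comm, ← mul_assoc, ← pow_succ']
    have e2 : (m:ℝ)/2^j * qk / 2 = (m:ℝ)/2^(j+1) * qk := by
      rw [pow_succ]; ring
    rw [Prod.mk.injEq]
    exact ⟨e1, e2⟩
  · rintro - ⟨m, j, rfl⟩
    exact er.zsmul_G m (er.halfpow_mul_G huE hu j hk)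
  · rintro - ⟨m, j, rfl⟩
    show (m:ℝ)/2^j * qk ≤ er.pfun u (m • (u^j * k))
    rcases lt_trichotomy m 0 with hm | hm | hm
    · -- m < 0 : equality
      have hmn : 1 ≤ (-m).toNat := by omega
      have hcast : ((((-m).toNat : ℕ)):ℤ) = -m := by omega
      have e1 : ((((-m).toNat : ℕ):ℤ)) • ((u:R)^j * (-k)) = m • (u^j * k) := by
        rw [hcast, mul_neg, smul_neg, neg_smul, neg_neg]
      rw [← e1, er.pfun_dy huE hu hCV hmn j (er.neg_G hk)]
      have hcr : ((((-m).toNat : ℕ)):ℝ) = -(m:ℝ) := by exact_mod_cast hcast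
      rw [hcr, hqk]
      apply le_of_eq
      ring
    · subst hm; simp [er.pfun_zero huE hu]
    · -- m > 0
      have hmn : 1 ≤ m.toNat := by omega
      have e1 : m • ((u:R)^j * k) = (((m.toNat : ℕ):ℤ)) • (u^j * k) := by
        congr 1; omega
      rw [e1, er.pfun_dy huE hu hCV hmn j hk]
      have hmr : ((m.toNat : ℕ):ℝ) = (m:ℝ) := by
        exact_mod_cast (by omega : ((m.toNat:ℕ):ℤ) = m)
      rw [hmr]
      have hq : qk ≤ er.pfun u k := er.neg_pfun_neg_le huE hu hk
      have hnn : (0:ℝ) ≤ (m:ℝ)/2^j := by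
        have : (0:ℝ) ≤ (m:ℝ) := by exact_mod_cast hm.le
        positivity
      nlinarith
  · refine ⟨1, 0, ?_⟩
    norm_num
    exact hqk.symm

end ERing
end Graph
section Extend
namespace ERing
variable {R : Type*} [Ring R]

theorem dy_add_dy {u : R} (hu : u + u = 1) (m m' : ℤ) (j j' : ℕ) (x : R) :
    m • ((u:R)^j * x) + m' • (u^j' * x) = (m * 2^j' + m' * 2^j) • (u^(j+j') * x) := by
  rw [add_smul, ← rescale hu m j j' x]
  congr 1
  rw [add_comm j j']
  exact rescale hu m' j' j x

theorem val_add_val (m m' : ℤ) (j j' : ℕ) :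
    (m:ℝ)/2^j + (m':ℝ)/2^j' = ((m * 2^j' + m' * 2^j : ℤ):ℝ)/2^(j+j') := by
  have h1 : ((2:ℝ))^j ≠ 0 := by positivity
  have h2 : ((2:ℝ))^j' ≠ 0 := by positivity
  push_cast
  rw [pow_add]
  field_simp

theorem Good.extend (er : ERing R) {u : R} (huE : u ∈ er.E) (hu : u + u = 1)
    (hCV : er.HasCV) {k : R} {Γ : Set (R × ℝ)} (hΓ : Good er u k Γ)
    {x : R} (hx : x ∈ er.G) :
    ∃ Γ', Good er u k Γ' ∧ Γ ⊆ Γ' ∧ ∃ c, (x, c) ∈ Γ' := by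
  classical
  obtain ⟨hadd, hneg, hzero, hhalf, hdom, hle, hk⟩ := hΓ
  set Bset : Set ℝ := {t | ∃ (y : R) (r : ℝ) (m : ℤ) (j : ℕ), (y, r) ∈ Γ ∧ 1 ≤ m ∧
    t = (er.pfun u (y + m • (u^j * x)) - r) * 2^j / m} with hBset
  -- the cross inequality
  have cross : ∀ y' r' (m' : ℤ) (j' : ℕ), (y', r') ∈ Γ → 1 ≤ m' →
      ∀ t ∈ Bset, (r' - er.pfun u (y' - m' • (u^j' * x))) * 2^j' / m' ≤ t := by
    rintro y' r' m' j' hy' hm' - ⟨y, r, m, j, hy, hm, rfl⟩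
    have hyG := hdom _ hy
    have hy'G := hdom _ hy'
    have hd : (0:ℝ) < (m:ℝ)/2^j := by
      have : (0:ℝ) < (m:ℝ) := by exact_mod_cast hm
      positivity
    have he : (0:ℝ) < (m':ℝ)/2^j' := by
      have : (0:ℝ) < (m':ℝ) := by exact_mod_cast hm'
      positivity
    set P : ℝ := er.pfun u (y + m • (u^j * x)) with hP
    set P' : ℝ := er.pfun u (y' - m' • (u^j' * x)) with hP'
    -- memberships in G
    have hdyx : ∀ (a : ℤ) (b : ℕ), a • ((u:R)^b * x) ∈ er.G :=
      fun a b => er.zsmul_G a (er.halfpow_mul_G huE hu b hx)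
    have hw1 : y + m • ((u:R)^j * x) ∈ er.G := er.add_G hyG (hdyx m j)
    have hw2 : y' - m' • ((u:R)^j' * x) ∈ er.G := er.sub_G hy'G (hdyx m' j')
    -- scaled p values
    have hp1 : er.pfun u (m' • ((u:R)^j' * (y + m • (u^j * x)))) = (m':ℝ)/2^j' * P := by
      have h1 : 1 ≤ m'.toNat := by omega
      have e : ((m'.toNat : ℕ):ℤ) = m' := by omega
      rw [← e, er.pfun_dy huE hu hCV h1 j' hw1]
      push_cast
      rw [hP]
    have hp2 : er.pfun u (m • ((u:R)^j * (y' - m' • (u^j' * x)))) = (m:ℝ)/2^j * P' := by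
      have h1 : 1 ≤ m.toNat := by omega
      have e : ((m.toNat : ℕ):ℤ) = m := by omega
      rw [← e, er.pfun_dy huE hu hCV h1 j hw2]
      push_cast
      rw [hP']
    -- the cancellation identity
    have cancel : m' • ((u:R)^j' * (y + m • (u^j * x))) + m • (u^j * (y' - m' • (u^j' * x)))
        = m' • (u^j' * y) + m • (u^j * y') := by
      have c1 : ((u:R)^j' * (m • (u^j * x))) = m • (u^(j'+j) * x) := by
        rw [mul_smul_comm, ← mul_assoc, ← pow_add]
      have c2 : ((u:R)^j * (m' • (u^j' * x))) = m' • (u^(j'+j) * x) := by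
        rw [mul_smul_comm, ← mul_assoc, ← pow_add, add_comm j j']
      rw [mul_add, mul_sub, smul_add, smul_sub, c1, c2, smul_smul, smul_smul, mul_comm m m']
      abel
    -- Γ membership of the combined element
    have hg1 : ((m' • ((u:R)^j' * y), (m':ℝ)/2^j' * r) : R × ℝ) ∈ Γ :=
      Good.dy ⟨hadd, hneg, hzero, hhalf, hdom, hle, hk⟩ hy m' j'
    have hg2 : ((m • ((u:R)^j * y'), (m:ℝ)/2^j * r') : R × ℝ) ∈ Γ :=
      Good.dy ⟨hadd, hneg, hzero, hhalf, hdom, hle, hk⟩ hy' m j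
    have hg3 := hadd _ hg1 _ hg2
    have hle3 := hle _ hg3
    simp only [Prod.fst_add, Prod.snd_add] at hle3
    -- p subadditivity
    have hsub := er.pfun_add huE hu
      (er.zsmul_G m' (er.halfpow_mul_G huE hu j' hw1))
      (er.zsmul_G m (er.halfpow_mul_G huE hu j hw2))
    rw [cancel] at hsub
    rw [hp1, hp2] at hsub
    have hcomb : (m':ℝ)/2^j' * r + (m:ℝ)/2^j * r'
        ≤ (m':ℝ)/2^j' * P + (m:ℝ)/2^j * P' := by
      have e : m' • ((u:R)^j' * y) + m • (u^j * y')
          = m' • ((u:R)^j' * (y + m • (u^j * x))) + m • (u^j * (y' - m' • (u^j' * x))) := by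
        rw [cancel]
      calc (m':ℝ)/2^j' * r + (m:ℝ)/2^j * r'
          ≤ er.pfun u (m' • ((u:R)^j' * y) + m • (u^j * y')) := hle3
        _ ≤ (m':ℝ)/2^j' * P + (m:ℝ)/2^j * P' := hsub
    -- conclude the divided form
    have h2j : (0:ℝ) < (2:ℝ)^j := by positivity
    have h2j' : (0:ℝ) < (2:ℝ)^j' := by positivity
    have h2jne : ((2:ℝ))^j ≠ 0 := ne_of_gt h2j
    have h2j'ne : ((2:ℝ))^j' ≠ 0 := ne_of_gt h2j'
    have hh : ∀ (a b c d : ℝ), d ≠ 0 → (a/d * b) * (c * d) = a * b * c := by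
      intro a b c d hd
      calc (a/d * b) * (c*d) = a*b*c*(d/d) := by ring
      _ = a*b*c := by rw [div_self hd, mul_one]
    have e1 : ((m':ℝ)/2^j' * r + (m:ℝ)/2^j * r') * (2^j * 2^j')
        = (m':ℝ) * r * 2^j + (m:ℝ) * r' * 2^j' := by
      rw [add_mul, hh (m':ℝ) r (2^j) (2^j') h2j'ne,
        mul_comm ((2:ℝ)^j) ((2:ℝ)^j'), hh (m:ℝ) r' (2^j') (2^j) h2jne]
    have e2 : ((m':ℝ)/2^j' * P + (m:ℝ)/2^j * P') * (2^j * 2^j')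
        = (m':ℝ) * P * 2^j + (m:ℝ) * P' * 2^j' := by
      rw [add_mul, hh (m':ℝ) P (2^j) (2^j') h2j'ne,
        mul_comm ((2:ℝ)^j) ((2:ℝ)^j'), hh (m:ℝ) P' (2^j') (2^j) h2jne]
    have h5 := mul_le_mul_of_nonneg_right hcomb (by positivity : (0:ℝ) ≤ 2^j * 2^j')
    rw [e1, e2] at h5
    rw [div_le_div_iff₀ (by positivity) (by positivity)]
    nlinarith [h5]
  have hBne : Bset.Nonempty := ⟨_, 0, 0, 1, 0, hzero, le_refl 1, rfl⟩
  have hBbdd : BddBelow Bset := by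
    refine ⟨(0 - er.pfun u ((0:R) - (1:ℤ) • (u^0 * x))) * 2^0 / ((1:ℤ):ℝ), ?_⟩
    intro t ht
    exact cross 0 0 1 0 hzero (le_refl 1) t ht
  set c : ℝ := sInf Bset with hc
  set Γ' : Set (R × ℝ) := {q | ∃ (y : R) (r : ℝ) (m : ℤ) (j : ℕ), (y, r) ∈ Γ ∧
    q = (y + m • (u^j * x), r + (m:ℝ)/2^j * c)} with hΓ'
  have hsub : Γ ⊆ Γ' := by
    rintro ⟨y, r⟩ hy
    exact ⟨y, r, 0, 0, hy, by norm_num⟩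
  refine ⟨Γ', ⟨?_, ?_, ?_, ?_, ?_, ?_, ?_⟩, hsub, ⟨c, ⟨0, 0, 1, 0, hzero, by norm_num⟩⟩⟩
  · -- add
    rintro - ⟨y, r, m, j, hy, rfl⟩ - ⟨y', r', m', j', hy', rfl⟩
    refine ⟨y + y', r + r', m * 2^j' + m' * 2^j, j + j', hadd _ hy _ hy', ?_⟩
    rw [Prod.mk_add_mk, Prod.mk.injEq]
    constructor
    · rw [← dy_add_dy hu m m' j j' x]; abel
    · rw [← val_add_val m m' j j']; ring
  · -- neg
    rintro - ⟨y, r, m, j, hy, rfl⟩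
    refine ⟨-y, -r, -m, j, hneg _ hy, ?_⟩
    rw [Prod.neg_mk, Prod.mk.injEq]
    constructor
    · rw [neg_smul]; abel
    · push_cast; ring
  · exact ⟨0, 0, 0, 0, hzero, by norm_num⟩
  · -- half
    rintro - ⟨y, r, m, j, hy, rfl⟩
    refine ⟨u * y, r/2, m, j+1, hhalf _ hy, ?_⟩
    rw [Prod.mk.injEq]
    constructor
    · show u * (y + m • (u^j * x)) = u * y + m • (u^(j+1) * x)
      rw [mul_add, mul_smul_comm, ← mul_assoc, ← pow_succ']
    · show (r + (m:ℝ)/2^j * c) / 2 = r/2 + (m:ℝ)/2^(j+1) * c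
      rw [pow_succ]; ring
  · -- dom
    rintro - ⟨y, r, m, j, hy, rfl⟩
    exact er.add_G (hdom _ hy) (er.zsmul_G m (er.halfpow_mul_G huE hu j hx))
  · -- hle
    rintro - ⟨y, r, m, j, hy, rfl⟩
    show r + (m:ℝ)/2^j * c ≤ er.pfun u (y + m • (u^j * x))
    rcases lt_trichotomy m 0 with hm | hm | hm
    · -- m < 0
      set m' : ℤ := -m with hm'
      have hm'1 : 1 ≤ m' := by omega
      have hlb : (r - er.pfun u (y - m' • (u^j * x))) * 2^j / m' ≤ c :=
        le_csInf hBne (fun t ht => cross y r m' j hy hm'1 t ht)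
      have he : y + m • ((u:R)^j * x) = y - m' • (u^j * x) := by
        rw [hm', neg_smul]; abel
      rw [he]
      have hmpos : (0:ℝ) < (m':ℝ) := by exact_mod_cast hm'1
      have h2j : (0:ℝ) < (2:ℝ)^j := by positivity
      have hmc : (m:ℝ) = -(m':ℝ) := by push_cast [hm']; ring
      rw [div_le_iff₀ hmpos] at hlb
      have h6 : r - er.pfun u (y - m' • (u^j * x)) ≤ c * (m':ℝ) / 2^j := by
        rw [le_div_iff₀ h2j]; linarith
      have e7 : r + (m:ℝ)/2^j * c = r - c * (m':ℝ) / 2^j := by rw [hmc]; ring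
      rw [e7]
      linarith
    · subst hm
      simpa using hle _ hy
    · -- m > 0
      have hmem : (er.pfun u (y + m • (u^j * x)) - r) * 2^j / m ∈ Bset :=
        ⟨y, r, m, j, hy, by omega, rfl⟩
      have hub : c ≤ (er.pfun u (y + m • (u^j * x)) - r) * 2^j / m := csInf_le hBbdd hmem
      have hmpos : (0:ℝ) < (m:ℝ) := by exact_mod_cast hm
      have h2j : (0:ℝ) < (2:ℝ)^j := by positivity
      rw [le_div_iff₀ hmpos] at hub
      have : c * m / 2^j ≤ er.pfun u (y + m • (u^j * x)) - r := by
        rw [div_le_iff₀ h2j]; linarith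
      have e : (m:ℝ)/2^j * c = c * m / 2^j := by ring
      rw [e]; linarith
  · -- hk
    refine ⟨k, -er.pfun u (-k), 0, 0, hk, by norm_num⟩

end ERing
end Extend
section Final
namespace ERing
variable {R : Type*} [Ring R]

theorem exists_good_max (er : ERing R) {u : R} (huE : u ∈ er.E) (hu : u + u = 1)
    (hCV : er.HasCV) {k : R} (hkG : k ∈ er.G) :
    ∃ Γ, Good er u k Γ ∧ ∀ x ∈ er.G, ∃ r, (x, r) ∈ Γ := by
  obtain ⟨Γm, hsub, hmax⟩ := zorn_subset_nonempty {Γ : Set (R × ℝ) | Good er u k Γ}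
    (fun c hcS hchain hcne => by
      obtain ⟨Γ₀, hΓ₀⟩ := hcne
      refine ⟨⋃₀ c, ⟨?_, ?_, ?_, ?_, ?_, ?_, ?_⟩, fun s hs => Set.subset_sUnion_of_mem hs⟩
      · rintro a ⟨Γ₁, h1, ha⟩ b ⟨Γ₂, h2, hb⟩
        rcases eq_or_ne Γ₁ Γ₂ with rfl | hne
        · exact ⟨Γ₁, h1, (hcS h1).1 a ha b hb⟩
        rcases hchain h1 h2 hne with hss | hss
        · exact ⟨Γ₂, h2, (hcS h2).1 a (hss ha) b hb⟩
        · exact ⟨Γ₁, h1, (hcS h1).1 a ha b (hss hb)⟩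
      · rintro a ⟨Γ₁, h1, ha⟩
        exact ⟨Γ₁, h1, (hcS h1).2.1 a ha⟩
      · exact ⟨Γ₀, hΓ₀, (hcS hΓ₀).2.2.1⟩
      · rintro a ⟨Γ₁, h1, ha⟩
        exact ⟨Γ₁, h1, (hcS h1).2.2.2.1 a ha⟩
      · rintro a ⟨Γ₁, h1, ha⟩
        exact (hcS h1).2.2.2.2.1 a ha
      · rintro a ⟨Γ₁, h1, ha⟩
        exact (hcS h1).2.2.2.2.2.1 a ha
      · exact ⟨Γ₀, hΓ₀, (hcS hΓ₀).2.2.2.2.2.2⟩)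
    _ (Good.initial er huE hu hCV hkG)
  refine ⟨Γm, hmax.1, fun x hxG => ?_⟩
  obtain ⟨Γ', hΓ', hsub', c, hc⟩ := Good.extend er huE hu hCV hmax.1 hxG
  exact ⟨c, hmax.2 hΓ' hsub' hc⟩

theorem exists_special_state (er : ERing R) {u : R} (huE : u ∈ er.E) (hu : u + u = 1)
    (hCV : er.HasCV) {k : R} (hkG : k ∈ er.G) :
    ∃ f : R → ℝ, er.IsState f ∧ f k = -er.pfun u (-k) := by
  classical
  obtain ⟨Γ, hΓ, hdomall⟩ := er.exists_good_max huE hu hCV hkG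
  set f : R → ℝ := fun x => if hx : ∃ r, (x, r) ∈ Γ then hx.choose else 0 with hf
  have fspec : ∀ {x : R} {r : ℝ}, (x, r) ∈ Γ → f x = r := by
    intro x r hr
    have hex : ∃ s, (x, s) ∈ Γ := ⟨r, hr⟩
    have : f x = hex.choose := by rw [hf]; exact dif_pos hex
    rw [this]
    exact hΓ.uniq huE hu hex.choose_spec hr
  have hadd : ∀ g ∈ er.G, ∀ h ∈ er.G, f (g + h) = f g + f h := by
    intro g hg h hh
    obtain ⟨r, hr⟩ := hdomall g hg
    obtain ⟨s, hs⟩ := hdomall h hh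
    have := hΓ.1 _ hr _ hs
    rw [Prod.mk_add_mk] at this
    rw [fspec hr, fspec hs, fspec this]
  have hmono : ∀ g ∈ er.G, ∀ h ∈ er.G, er.le g h → f g ≤ f h := by
    intro g hg h hh hle
    obtain ⟨r, hr⟩ := hdomall g hg
    have hdG : h - g ∈ er.G := er.sub_G hh hg
    obtain ⟨t, ht⟩ := hdomall (h - g) hdG
    have hsum := hΓ.1 _ hr _ ht
    rw [Prod.mk_add_mk] at hsum
    have e : g + (h - g) = h := by abel
    rw [e] at hsum
    have hfh : f h = r + t := fspec hsum
    have hneg := hΓ.2.1 _ ht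
    rw [Prod.neg_mk] at hneg
    have hlet := hΓ.2.2.2.2.2.1 _ hneg
    have hp : er.pfun u (-(h-g)) ≤ 0 :=
      er.pfun_nonpos huE hu (er.neg_G hdG) (by rwa [neg_neg])
    have ht0 : 0 ≤ t := by
      simp only at hlet
      linarith
    rw [fspec hr, hfh]
    linarith
  have hone : f 1 = 1 := by
    obtain ⟨r, hr⟩ := hdomall 1 er.one_G
    have h1 : r ≤ er.pfun u 1 := hΓ.2.2.2.2.2.1 _ hr
    rw [er.pfun_one huE hu] at h1
    have hneg := hΓ.2.1 _ hr
    rw [Prod.neg_mk] at hneg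
    have h2 : -r ≤ er.pfun u (-1) := hΓ.2.2.2.2.2.1 _ hneg
    have h3 := er.pfun_neg_one huE hu
    rw [fspec hr]
    linarith
  exact ⟨f, ⟨hadd, hmono, hone⟩, fspec hΓ.2.2.2.2.2.2⟩

end ERing
end Final

/-- In an AH-algebra, the states are order determining: for
`g, h ∈ G`, `g ≤ h` iff `ω(g) ≤ ω(h)` for every state `ω`. -/
theorem stmt12 {R : Type*} [Ring R] (er : ERing R) (hAH : er.IsAH) :
    ∀ g ∈ er.G, ∀ h ∈ er.G,
      (er.le g h ↔ ∀ f : R → ℝ, er.IsState f → f g ≤ f h) := by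
  obtain ⟨⟨u, huE, hu⟩, hQA, hCV⟩ := hAH
  intro g hg h hh
  constructor
  · intro hle f hf
    exact hf.2.1 g hg h hh hle
  · intro hall
    have hkG : h - g ∈ er.G := er.sub_G hh hg
    obtain ⟨f, hf, hfk⟩ := er.exists_special_state huE hu hCV hkG
    have h1 : f g ≤ f h := hall f hf
    have h2 : f (g + (h - g)) = f g + f (h - g) := hf.1 g hg (h - g) hkG
    have h3 : g + (h - g) = h := by abel
    rw [h3] at h2
    have h4 : 0 ≤ f (h - g) := by linarith
    rw [hfk] at h4
    have hp : er.pfun u (-(h - g)) ≤ 0 := by linarith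
    -- conclude h - g ∈ Epos by the archimedean property
    show h - g ∈ er.Epos
    apply er.arch huE hu hCV hkG
    intro i
    have hlt : er.pfun u (-(h - g)) < 1/2^i := lt_of_le_of_lt hp (by positivity)
    have hne := er.pSet_nonempty u (er.neg_G hkG)
    obtain ⟨t, htmem, htlt⟩ := exists_lt_of_csInf_lt hne hlt
    obtain ⟨m, j, rfl, hm⟩ := htmem
    -- hm : m • u^j - -(h-g) ∈ Epos
    have hm' : m • (u^j : R) + (h - g) ∈ er.Epos := by
      rwa [sub_neg_eq_add] at hm
    have hint : m * 2^i + 1 ≤ 2^j := by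
      have h2i : (0:ℝ) < 2^i := by positivity
      have h2j : (0:ℝ) < 2^j := by positivity
      rw [div_lt_div_iff₀ h2j h2i] at htlt
      have : (m:ℝ) * 2^i < 2^j := by nlinarith
      have hz : (m * 2^i : ℤ) < 2^j := by exact_mod_cast this
      omega
    have hcoef : ((2:ℤ)^j - m * 2^i) • (u^(i+j) : R) ∈ er.Epos :=
      er.zsmul_Epos (by omega) (er.halfpow_Epos huE hu (i+j))
    have e : (h - g) + u^i = (m • (u^j : R) + (h - g)) + ((2:ℤ)^j - m * 2^i) • (u^(i+j) : R) := by
      have e1 : (u^i : R) = ((2:ℤ)^j) • (u^(i+j)) := by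
        simpa using ERing.halfpow_shift hu 1 i j
      have e2 : m • (u^j : R) = (m * 2^i) • (u^(i+j)) := by
        rw [add_comm i j]
        exact ERing.halfpow_shift hu m j i
      rw [sub_smul, e1, e2]
      abel
    rw [e]
    exact er.add_Epos hm' hcoef
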